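/- Let 0 < a < b be real numbers and let n be a positive even integer. Then the polynomial S_n(x) = T_{n/2}((2x² − a² − b²)/(b² − a²)) satisfies S_n′(b) = n²·b/(b²−a²) and sup_{x∈E} |S_n′(x)| = n²·b/(b²−a²), where E = [−b,−a] ∪ [a,b]. In particular the Markov-type bound n²b/(b²−a²) on two symmetric intervals is attained by S_n. -/

import Mathlib

open Polynomial Set

lemma abs_sin_nat_mul_le (k : ℕ) (θ : ℝ) : |Real.sin (k * θ)| ≤ k * |Real.sin θ| := by
  induction k with
  | zero => simp
  | succ k ih =>
    have : ((k:ℝ)+1) * θ = k * θ + θ := by ring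
    push_cast
    rw [this, Real.sin_add]
    calc |Real.sin (k*θ) * Real.cos θ + Real.cos (k*θ) * Real.sin θ|
        ≤ |Real.sin (k*θ) * Real.cos θ| + |Real.cos (k*θ) * Real.sin θ| := abs_add_le _ _
      _ ≤ |Real.sin (k*θ)| * 1 + 1 * |Real.sin θ| := by
          rw [abs_mul, abs_mul]
          gcongr
          · exact Real.abs_cos_le_one _
          · exact Real.abs_cos_le_one _
      _ ≤ k * |Real.sin θ| + 1 * |Real.sin θ| := by simpa using ih
      _ = ((k:ℝ)+1) * |Real.sin θ| := by ring

lemma U_eval_one (k : ℕ) : (Chebyshev.U ℝ (k : ℤ)).eval 1 = k + 1 := by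
  induction k using Nat.twoStepInduction with
  | zero => simp [Chebyshev.U_zero]
  | one => norm_num [Chebyshev.U_one]
  | more k ih1 ih2 =>
    have h : ((k:ℤ) + 2) = ((k + 2 : ℕ) : ℤ) := by push_cast; ring
    rw [← h, Chebyshev.U_add_two]
    push_cast at ih1 ih2
    simp only [eval_sub, eval_mul, eval_ofNat, eval_X]
    rw [show (k:ℤ)+1 = ((k+1:ℕ):ℤ) by push_cast; ring] at *
    rw [ih2, ih1]
    push_cast; ring

lemma U_abs_le (k : ℕ) (t : ℝ) (ht : t ∈ Icc (-1:ℝ) 1) :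
    |(Chebyshev.U ℝ (k : ℤ)).eval t| ≤ k + 1 := by
  have hIoo : ∀ s ∈ Ioo (-1:ℝ) 1, |(Chebyshev.U ℝ (k : ℤ)).eval s| ≤ k + 1 := by
    intro s hs
    set θ := Real.arccos s with hθ
    have hcos : Real.cos θ = s := Real.cos_arccos hs.1.le hs.2.le
    have hlt : θ < Real.pi := lt_of_le_of_ne (Real.arccos_le_pi s)
      (fun h => by rw [h, Real.cos_pi] at hcos; linarith [hs.1])
    have hsin : 0 < Real.sin θ :=
      Real.sin_pos_of_pos_of_lt_pi (Real.arccos_pos.mpr hs.2) hlt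
    have key := Polynomial.Chebyshev.U_real_cos θ (k : ℤ)
    rw [hcos] at key
    have h2 : |(Chebyshev.U ℝ (k : ℤ)).eval s| * Real.sin θ = |Real.sin (((k:ℝ)+1) * θ)| := by
      rw [← abs_of_pos hsin, ← abs_mul, key]; push_cast; ring_nf
    have h3 : |Real.sin (((k:ℝ)+1) * θ)| ≤ ((k:ℝ)+1) * Real.sin θ := by
      have := abs_sin_nat_mul_le (k+1) θ
      push_cast at this
      rwa [abs_of_pos hsin] at this
    have := h2 ▸ h3
    calc |(Chebyshev.U ℝ (k : ℤ)).eval s|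
        = |(Chebyshev.U ℝ (k : ℤ)).eval s| * Real.sin θ / Real.sin θ := by
          rw [mul_div_assoc, div_self hsin.ne', mul_one]
      _ ≤ ((k:ℝ)+1) * Real.sin θ / Real.sin θ := by
          gcongr
      _ = (k:ℝ)+1 := by rw [mul_div_assoc, div_self hsin.ne', mul_one]
  -- extend to closed interval by continuity
  have htc : t ∈ closure (Ioo (-1:ℝ) 1) := by
    rw [closure_Ioo (by norm_num : (-1:ℝ) ≠ 1)]; exact ht
  have hne : (nhdsWithin t (Ioo (-1:ℝ) 1)).NeBot :=
    mem_closure_iff_nhdsWithin_neBot.mp htc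
  have htend : Filter.Tendsto (fun s => |(Chebyshev.U ℝ (k : ℤ)).eval s|)
      (nhdsWithin t (Ioo (-1:ℝ) 1)) (nhds (|(Chebyshev.U ℝ (k : ℤ)).eval t|)) :=
    (((Chebyshev.U ℝ (k : ℤ)).continuous_aeval.abs).tendsto t).mono_left nhdsWithin_le_nhds
  exact le_of_tendsto htend (Filter.eventually_of_mem self_mem_nhdsWithin hIoo)

theorem markov_bound_attained_by_Sn
    (a b : ℝ) (ha : 0 < a) (hab : a < b)
    (n : ℕ) (hn : 0 < n) (hne : Even n)
    (E : Set ℝ) (hE : E = Icc (-b) (-a) ∪ Icc a b)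
    (S : ℝ → ℝ)
    (hS : ∀ x : ℝ, S x =
      (Polynomial.Chebyshev.T ℝ ((n / 2 : ℕ) : ℤ)).eval
        ((2 * x ^ 2 - a ^ 2 - b ^ 2) / (b ^ 2 - a ^ 2))) :
    deriv S b = (n : ℝ) ^ 2 * b / (b ^ 2 - a ^ 2) ∧
      sSup ((fun x => |deriv S x|) '' E) = (n : ℝ) ^ 2 * b / (b ^ 2 - a ^ 2) := by
  set m : ℕ := n / 2 with hmdef
  obtain ⟨k, hk⟩ := hne
  have hm2 : n = 2 * m := by omega
  have hm1 : 1 ≤ m := by omega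
  set c : ℝ := b ^ 2 - a ^ 2 with hc
  have hcpos : 0 < c := by nlinarith
  set u : ℝ → ℝ := fun x => (2 * x ^ 2 - a ^ 2 - b ^ 2) / c with hu
  have hSfun : S = fun x => (Polynomial.Chebyshev.T ℝ (m : ℤ)).eval (u x) := funext hS
  -- derivative formula
  have hidx : (m : ℤ) - 1 = ((m - 1 : ℕ) : ℤ) := by omega
  have key : ∀ x : ℝ, deriv S x =
      (m : ℝ) * (Polynomial.Chebyshev.U ℝ ((m - 1 : ℕ) : ℤ)).eval (u x) * (4 * x / c) := by
    intro x
    have h1 : HasDerivAt u (4 * x / c) x := by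
      have : HasDerivAt (fun y : ℝ => 2 * y ^ 2 - a ^ 2 - b ^ 2) (4 * x) x := by
        have h := (hasDerivAt_pow 2 x).const_mul (2 : ℝ)
        have h' := (h.sub_const (a ^ 2)).sub_const (b ^ 2)
        exact h'.congr_deriv (by push_cast; ring)
      exact this.div_const c
    have h2 := (Polynomial.hasDerivAt (Polynomial.Chebyshev.T ℝ (m : ℤ)) (u x)).comp x h1
    have h2' : HasDerivAt (fun y => (Polynomial.Chebyshev.T ℝ (m : ℤ)).eval (u y))
        ((Polynomial.Chebyshev.T ℝ (m : ℤ)).derivative.eval (u x) * (4 * x / c)) x := h2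
    rw [hSfun]
    rw [h2'.deriv]
    rw [Polynomial.Chebyshev.T_derivative_eq_U, hidx]
    simp [Polynomial.eval_mul]
  have hub : u b = 1 := by
    rw [hu]
    field_simp
    ring
  have hUone : (Polynomial.Chebyshev.U ℝ ((m - 1 : ℕ) : ℤ)).eval 1 = m := by
    rw [U_eval_one (m - 1)]
    have : ((m : ℝ) - 1) + 1 = m := by ring
    push_cast [Nat.cast_sub hm1]
    ring
  have hval : deriv S b = (n : ℝ) ^ 2 * b / c := by
    rw [key b, hub, hUone, hm2]
    push_cast
    field_simp
    ring
  refine ⟨hval, ?_⟩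
  have hvalpos : 0 ≤ (n : ℝ) ^ 2 * b / c := div_nonneg (by nlinarith [sq_nonneg (n:ℝ)]) hcpos.le
  refine IsGreatest.csSup_eq ⟨?_, ?_⟩
  · exact ⟨b, by rw [hE]; exact Or.inr ⟨hab.le, le_refl b⟩, by show |deriv S b| = _; rw [hval]; exact abs_of_nonneg hvalpos⟩
  · rintro y ⟨x, hx, rfl⟩
    rw [hE] at hx
    have hxb : |x| ≤ b := by
      rcases hx with h | h
      · rw [abs_le]; constructor <;> linarith [h.1, h.2, ha, hab]
      · rw [abs_le]; constructor <;> linarith [h.1, h.2, ha, hab]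
    have hx2 : x ^ 2 ≤ b ^ 2 ∧ a ^ 2 ≤ x ^ 2 := by
      rcases hx with h | h
      · constructor <;> nlinarith [h.1, h.2]
      · constructor <;> nlinarith [h.1, h.2]
    have huIcc : u x ∈ Icc (-1 : ℝ) 1 := by
      constructor
      · rw [hu, le_div_iff₀ hcpos]; nlinarith [hx2.2]
      · rw [hu, div_le_one hcpos]; nlinarith [hx2.1]
    have hUb := U_abs_le (m - 1) (u x) huIcc
    have hUb' : |(Polynomial.Chebyshev.U ℝ ((m - 1 : ℕ) : ℤ)).eval (u x)| ≤ m := by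
      calc |(Polynomial.Chebyshev.U ℝ ((m - 1 : ℕ) : ℤ)).eval (u x)| ≤ (m - 1 : ℕ) + 1 := hUb
        _ = m := by push_cast [Nat.cast_sub hm1]; ring
    calc |deriv S x| = (m : ℝ) * |(Polynomial.Chebyshev.U ℝ ((m - 1 : ℕ) : ℤ)).eval (u x)|
          * (4 * |x| / c) := by
          rw [key x, abs_mul, abs_mul, abs_div, abs_of_nonneg (by positivity : (0:ℝ) ≤ (m:ℝ)),
            abs_of_pos hcpos, abs_mul]
          norm_num
      _ ≤ (m : ℝ) * m * (4 * b / c) := by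
          gcongr
      _ = (n : ℝ) ^ 2 * b / c := by rw [hm2]; push_cast; field_simp; ring
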